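/- Let U, V ∈ SL_2(ℤ) generate a free subgroup of rank 2 with U, V as free generators. Then the subgroup Im(U − I) + Im(V − I) of ℤ² (the sum of the images of the linear maps U − I and V − I acting on ℤ²) has rank 2. -/

import Mathlib

/-- In a submodule of `ℤ²` of rank at most 1, any two elements have vanishing determinant. -/
lemma dep_det_aux {S : Submodule ℤ (Fin 2 → ℤ)} (hS : Module.finrank ℤ S ≤ 1)
    {x y : Fin 2 → ℤ} (hx : x ∈ S) (hy : y ∈ S) : x 0 * y 1 = x 1 * y 0 := by
  by_contra hdet
  have hd : x 0 * y 1 - x 1 * y 0 ≠ 0 := sub_ne_zero.mpr hdet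
  have hli : LinearIndependent ℤ ![(⟨x, hx⟩ : S), ⟨y, hy⟩] := by
    rw [LinearIndependent.pair_iff]
    intro s t hst
    have hst' : s • x + t • y = 0 := by
      have := congrArg (Subtype.val) hst
      simpa using this
    have h0 : s * x 0 + t * y 0 = 0 := by
      have := congrFun hst' 0; simpa using this
    have h1 : s * x 1 + t * y 1 = 0 := by
      have := congrFun hst' 1; simpa using this
    constructor
    · have hs : s * (x 0 * y 1 - x 1 * y 0) = 0 := by linear_combination y 1 * h0 - y 0 * h1
      rcases mul_eq_zero.mp hs with h | h
      · exact h
      · exact absurd h hd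
    · have ht : t * (x 0 * y 1 - x 1 * y 0) = 0 := by linear_combination x 0 * h1 - x 1 * h0
      rcases mul_eq_zero.mp ht with h | h
      · exact h
      · exact absurd h hd
  have := hli.fintype_card_le_finrank
  simp only [Fintype.card_fin] at this
  omega

/-- If `U, V ∈ SL₂(ℤ)` freely generate a free subgroup of rank 2, then the
subgroup `Im(U - I) + Im(V - I)` of `ℤ²` has rank 2. -/
theorem stmt13 (U V : Matrix.SpecialLinearGroup (Fin 2) ℤ)
    (hfree : Function.Injective (FreeGroup.lift (fun b : Bool => if b then U else V))) :
    Module.finrank ℤ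
      ↥(LinearMap.range (Matrix.mulVecLin (U.val - 1)) ⊔
        LinearMap.range (Matrix.mulVecLin (V.val - 1)) : Submodule ℤ (Fin 2 → ℤ)) = 2 := by
  set A : Matrix (Fin 2) (Fin 2) ℤ := U.val - 1 with hA
  set B : Matrix (Fin 2) (Fin 2) ℤ := V.val - 1 with hB
  set S : Submodule ℤ (Fin 2 → ℤ) :=
    LinearMap.range (Matrix.mulVecLin A) ⊔ LinearMap.range (Matrix.mulVecLin B) with hSdef
  have hle : Module.finrank ℤ S ≤ 2 := by
    have := Submodule.finrank_le S
    simpa using this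
  have key : ¬ Module.finrank ℤ S ≤ 1 := by
    intro hS
    -- columns of A and B lie in S
    have hAcol : ∀ j, (fun i => A i j) ∈ S := by
      intro j
      apply Submodule.mem_sup_left
      exact ⟨Pi.single j 1, by
        simp [Matrix.mulVecLin_apply, Matrix.mulVec_single]; rfl⟩
    have hBcol : ∀ j, (fun i => B i j) ∈ S := by
      intro j
      apply Submodule.mem_sup_right
      exact ⟨Pi.single j 1, by
        simp [Matrix.mulVecLin_apply, Matrix.mulVec_single]; rfl⟩
    have h1 : A 0 0 * A 1 1 = A 1 0 * A 0 1 := dep_det_aux hS (hAcol 0) (hAcol 1)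
    have h2 : A 0 0 * B 1 1 = A 1 0 * B 0 1 := dep_det_aux hS (hAcol 0) (hBcol 1)
    have h3 : A 0 1 * B 1 0 = A 1 1 * B 0 0 := dep_det_aux hS (hAcol 1) (hBcol 0)
    have h4 : A 0 0 * B 1 0 = A 1 0 * B 0 0 := dep_det_aux hS (hAcol 0) (hBcol 0)
    have h5 : A 0 1 * B 1 1 = A 1 1 * B 0 1 := dep_det_aux hS (hAcol 1) (hBcol 1)
    have h6 : B 0 0 * B 1 1 = B 1 0 * B 0 1 := dep_det_aux hS (hBcol 0) (hBcol 1)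
    have hUeq : U.val = A + 1 := by rw [hA]; abel
    have hVeq : V.val = B + 1 := by rw [hB]; abel
    have hdetU : (A 0 0 + 1) * (A 1 1 + 1) - A 0 1 * A 1 0 = 1 := by
      have := U.2
      rw [hUeq, Matrix.det_fin_two] at this
      simpa [Matrix.one_apply] using this
    have hdetV : (B 0 0 + 1) * (B 1 1 + 1) - B 0 1 * B 1 0 = 1 := by
      have := V.2
      rw [hVeq, Matrix.det_fin_two] at this
      simpa [Matrix.one_apply] using this
    have htrA : A 0 0 + A 1 1 = 0 := by linear_combination hdetU - h1
    have htrB : B 0 0 + B 1 1 = 0 := by linear_combination hdetV - h6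
    have hAB : A * B = 0 := by
      ext i j
      fin_cases i <;> fin_cases j <;>
        simp only [Matrix.mul_apply, Fin.sum_univ_two, Matrix.zero_apply, Fin.isValue, Fin.mk_zero, Fin.mk_one, Fin.zero_eta, Fin.mk_one]
      · linear_combination h3 + B 0 0 * htrA
      · linear_combination h5 + B 0 1 * htrA
      · linear_combination B 1 0 * htrA - h4
      · linear_combination B 1 1 * htrA - h2
    have hBA : B * A = 0 := by
      ext i j
      fin_cases i <;> fin_cases j <;>
        simp only [Matrix.mul_apply, Fin.sum_univ_two, Matrix.zero_apply, Fin.isValue, Fin.mk_zero, Fin.mk_one, Fin.zero_eta, Fin.mk_one]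
      · linear_combination A 0 0 * htrB - h2
      · linear_combination A 0 1 * htrB - h5
      · linear_combination A 1 0 * htrB + h4
      · linear_combination A 1 1 * htrB + h3
    have hcomm : U.val * V.val = V.val * U.val := by
      have hsub : U.val * V.val - V.val * U.val = A * B - B * A := by
        rw [hA, hB]; noncomm_ring
      have h0 : U.val * V.val - V.val * U.val = 0 := by rw [hsub, hAB, hBA, sub_zero]
      exact sub_eq_zero.mp h0

    have hUV : U * V = V * U := Subtype.ext (by simpa using hcomm)
    have hw : FreeGroup.lift (fun b : Bool => if b then U else V)
        (FreeGroup.of true * FreeGroup.of false) =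
        FreeGroup.lift (fun b : Bool => if b then U else V)
        (FreeGroup.of false * FreeGroup.of true) := by
      simp only [map_mul, FreeGroup.lift_apply_of, if_true, if_false, Bool.false_eq_true]
      exact hUV
    have := hfree hw
    exact absurd this (by decide)
  omega
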